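/- Let G be a finite connected split graph and let D_s and D_t be two distance-2 dominating sets of G with |D_s| = |D_t|. Then there exists a TJ-sequence in G from D_s to D_t. -/
import Mathlib


/-- `D` is a distance-`r` dominating set of `G`. -/
def IsDrDS {V : Type*} (G : SimpleGraph V) (r : ℕ) (D : Set V) : Prop :=
  ∀ v : V, ∃ u ∈ D, G.Reachable u v ∧ G.dist u v ≤ r

/-- A TJ-sequence of length `q` of distance-`r` dominating sets of `G`:
each step jumps a token to an arbitrary unoccupied vertex. -/
def IsTJSeq {V : Type*} (G : SimpleGraph V) (r q : ℕ)
    (Dseq : Fin (q + 1) → Finset V) : Prop :=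
  (∀ i, IsDrDS G r ↑(Dseq i)) ∧
  ∀ i : Fin q, ∃ x ∈ Dseq i.castSucc, ∃ y, y ∉ Dseq i.castSucc ∧
    (↑(Dseq i.succ) : Set V) = (↑(Dseq i.castSucc) \ {x}) ∪ {y}

/-- One TJ step whose result is a distance-`r` dominating set. -/
def StepTJ {V : Type*} (G : SimpleGraph V) (r : ℕ) (A B : Finset V) : Prop :=
  IsDrDS G r ↑B ∧ ∃ x ∈ A, ∃ y, y ∉ A ∧ (↑B : Set V) = (↑A \ {x}) ∪ {y}

lemma seq_of_rtg {V : Type*} (G : SimpleGraph V) (r : ℕ) (Ds Dt : Finset V)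
    (hDs : IsDrDS G r ↑Ds) (h : Relation.ReflTransGen (StepTJ G r) Ds Dt) :
    ∃ (q : ℕ) (Dseq : Fin (q + 1) → Finset V),
      IsTJSeq G r q Dseq ∧ Dseq 0 = Ds ∧ Dseq (Fin.last q) = Dt := by
  induction h with
  | refl => exact ⟨0, fun _ => Ds, ⟨fun _ => hDs, fun i => i.elim0⟩, rfl, rfl⟩
  | @tail b c hab hbc ih =>
    obtain ⟨q, Dseq, ⟨hdom, hstep⟩, h0, hl⟩ := ih
    refine ⟨q + 1, Fin.snoc Dseq c, ⟨?_, ?_⟩, ?_, ?_⟩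
    · intro i
      induction i using Fin.lastCases with
      | last => simpa using hbc.1
      | cast j => simpa using hdom j
    · intro i
      induction i using Fin.lastCases with
      | last =>
        simp only [Fin.succ_last, Fin.snoc_last, Fin.snoc_castSucc, hl]
        exact hbc.2
      | cast j =>
        simp only [Fin.succ_castSucc, Fin.snoc_castSucc]
        exact hstep j
    · rw [show (0 : Fin (q + 1 + 1)) = (0 : Fin (q + 1)).castSucc by simp]
      rw [Fin.snoc_castSucc]
      exact h0
    · simp

lemma reach_aux {V : Type*} [DecidableEq V] (G : SimpleGraph V) {k : V}
    (hk : ∀ D : Finset V, k ∈ D → IsDrDS G 2 ↑D) :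
    ∀ (n : ℕ) (A B : Finset V), (B \ A).card ≤ n → k ∈ A → k ∈ B →
      A.card = B.card → Relation.ReflTransGen (StepTJ G 2) A B := by
  intro n
  induction n with
  | zero =>
    intro A B hn hkA hkB hAB
    have hsub : B ⊆ A := by
      rw [← Finset.sdiff_eq_empty_iff_subset]
      exact Finset.card_eq_zero.mp (Nat.le_zero.mp hn)
    have : A = B := (Finset.eq_of_subset_of_card_le hsub hAB.le).symm
    subst this
    exact Relation.ReflTransGen.refl
  | succ n ih =>
    intro A B hn hkA hkB hAB
    by_cases hsub : B ⊆ A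
    · have : A = B := (Finset.eq_of_subset_of_card_le hsub hAB.le).symm
      subst this
      exact Relation.ReflTransGen.refl
    · obtain ⟨y, hyB, hyA⟩ := Finset.not_subset.mp hsub
      have hABne : (A \ B).Nonempty := by
        rw [Finset.sdiff_nonempty]
        intro hAB'
        exact hyA (Finset.eq_of_subset_of_card_le hAB' hAB.ge ▸ hyB)
      obtain ⟨x, hx⟩ := hABne
      have hxA : x ∈ A := (Finset.mem_sdiff.mp hx).1
      have hxB : x ∉ B := (Finset.mem_sdiff.mp hx).2
      have hxk : x ≠ k := fun h => hxB (h ▸ hkB)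
      set A' := insert y (A.erase x) with hA'
      have hkA' : k ∈ A' := Finset.mem_insert_of_mem
        (Finset.mem_erase.mpr ⟨hxk.symm, hkA⟩)
      have hyErase : y ∉ A.erase x := fun h => hyA (Finset.mem_of_mem_erase h)
      have hA'card : A'.card = A.card := by
        rw [hA', Finset.card_insert_of_notMem hyErase, Finset.card_erase_of_mem hxA]
        have : 1 ≤ A.card := Finset.card_pos.mpr ⟨x, hxA⟩
        omega
      have hcoe : (↑A' : Set V) = (↑A \ {x}) ∪ {y} := by
        rw [hA']
        push_cast
        rw [Set.union_singleton]
      have hstep : StepTJ G 2 A A' := ⟨hk A' hkA', x, hxA, y, hyA, hcoe⟩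
      have hBA' : B \ A' = (B \ A).erase y := by
        ext z
        simp only [Finset.mem_sdiff, Finset.mem_erase, hA', Finset.mem_insert]
        constructor
        · rintro ⟨hzB, hz⟩
          push_neg at hz
          exact ⟨hz.1, hzB, hz.2 (fun hzx => hxB (hzx ▸ hzB))⟩
        · rintro ⟨hzy, hzB, hzA⟩
          exact ⟨hzB, by push_neg; exact ⟨hzy, fun _ => hzA⟩⟩
      have hmeas : (B \ A').card ≤ n := by
        rw [hBA', Finset.card_erase_of_mem (Finset.mem_sdiff.mpr ⟨hyB, hyA⟩)]
        omega
      exact Relation.ReflTransGen.head hstep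
        (ih A' B hmeas hkA' hkB (hA'card.trans hAB))

theorem stmt5 {V : Type*} [Fintype V] (G : SimpleGraph V) (K S : Set V)
    (hpart : K ∪ S = Set.univ) (hdisj : Disjoint K S)
    (hK : G.IsClique K) (hS : ∀ a ∈ S, ∀ b ∈ S, ¬ G.Adj a b)
    (hconn : G.Connected)
    (Ds Dt : Finset V) (hDs : IsDrDS G 2 ↑Ds) (hDt : IsDrDS G 2 ↑Dt)
    (hcard : Ds.card = Dt.card) :
    ∃ (q : ℕ) (Dseq : Fin (q + 1) → Finset V),
      IsTJSeq G 2 q Dseq ∧ Dseq 0 = Ds ∧ Dseq (Fin.last q) = Dt := by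
  classical
  have hmemKS : ∀ v : V, v ∈ K ∪ S := fun v => by rw [hpart]; trivial
  obtain ⟨v0⟩ : Nonempty V := hconn.nonempty
  obtain ⟨u, huDs, -⟩ := hDs v0
  have huDs : u ∈ Ds := huDs
  obtain ⟨t, htDt, -⟩ := hDt v0
  have htDt : t ∈ Dt := htDt
  rcases Set.eq_empty_or_nonempty K with hKe | ⟨k, hkK⟩
  · -- K empty: V is a subsingleton, hence Ds = Dt
    have hallS : ∀ v : V, v ∈ S := fun v => by
      rcases hmemKS v with h | h
      · rw [hKe] at h; exact h.elim
      · exact h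
    have hsub : ∀ a b : V, a = b := by
      intro a b
      by_contra hne
      obtain ⟨p⟩ := hconn.preconnected a b
      cases p with
      | nil => exact hne rfl
      | cons h _ => exact hS a (hallS a) _ (hallS _) h
    have hDsDt : Ds = Dt := Finset.ext fun a =>
      ⟨fun _ => (hsub a t) ▸ htDt, fun _ => (hsub a u) ▸ huDs⟩
    subst hDsDt
    exact seq_of_rtg G 2 Ds Ds hDs Relation.ReflTransGen.refl
  · -- K nonempty: any set containing k is distance-2 dominating
    have hkdom : ∀ D : Finset V, k ∈ D → IsDrDS G 2 ↑D := by
      intro D hkD v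
      refine ⟨k, hkD, hconn.preconnected k v, ?_⟩
      rcases hmemKS v with hvK | hvS
      · by_cases hkv : k = v
        · subst hkv; simp [SimpleGraph.dist_self]
        · have hadj : G.Adj k v := hK hkK hvK hkv
          have := SimpleGraph.dist_le (SimpleGraph.Walk.cons hadj SimpleGraph.Walk.nil)
          simpa using this.trans (by norm_num)
      · have hkv : k ≠ v := fun h => (Set.disjoint_left.mp hdisj hkK) (h ▸ hvS)
        obtain ⟨p⟩ := hconn.preconnected v k
        cases p with
        | nil => exact (hkv rfl).elim
        | @cons _ w _ h p' =>
          have hwK : w ∈ K := by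
            rcases hmemKS w with h' | h'
            · exact h'
            · exact (hS v hvS w h' h).elim
          by_cases hkw : k = w
          · subst hkw
            have := SimpleGraph.dist_le (SimpleGraph.Walk.cons h.symm SimpleGraph.Walk.nil)
            simpa using this.trans (by norm_num)
          · have hadj : G.Adj k w := hK hkK hwK hkw
            have := SimpleGraph.dist_le
              (SimpleGraph.Walk.cons hadj (SimpleGraph.Walk.cons h.symm SimpleGraph.Walk.nil))
            simpa using this
    -- step 1: reach a set containing k
    have hstep1 : ∃ A : Finset V, Relation.ReflTransGen (StepTJ G 2) Ds A ∧
        k ∈ A ∧ A.card = Ds.card := by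
      by_cases hkDs : k ∈ Ds
      · exact ⟨Ds, Relation.ReflTransGen.refl, hkDs, rfl⟩
      · refine ⟨insert k (Ds.erase u), Relation.ReflTransGen.single
          ⟨hkdom _ (Finset.mem_insert_self _ _), u, huDs, k, hkDs, ?_⟩,
          Finset.mem_insert_self _ _, ?_⟩
        · push_cast
          rw [Set.union_singleton]
        · rw [Finset.card_insert_of_notMem (fun h => hkDs (Finset.mem_of_mem_erase h)),
            Finset.card_erase_of_mem huDs]
          have : 1 ≤ Ds.card := Finset.card_pos.mpr ⟨u, huDs⟩
          omega
    -- step 3: from a set containing k, reach Dt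
    have hstep3 : ∃ B : Finset V, k ∈ B ∧ B.card = Dt.card ∧
        Relation.ReflTransGen (StepTJ G 2) B Dt := by
      by_cases hkDt : k ∈ Dt
      · exact ⟨Dt, hkDt, rfl, Relation.ReflTransGen.refl⟩
      · have htk : t ≠ k := fun h => hkDt (h ▸ htDt)
        refine ⟨insert k (Dt.erase t), Finset.mem_insert_self _ _, ?_,
          Relation.ReflTransGen.single ⟨hDt, k, Finset.mem_insert_self _ _, t, ?_, ?_⟩⟩
        · rw [Finset.card_insert_of_notMem (fun h => hkDt (Finset.mem_of_mem_erase h)),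
            Finset.card_erase_of_mem htDt]
          have : 1 ≤ Dt.card := Finset.card_pos.mpr ⟨t, htDt⟩
          omega
        · simp [htk]
        · ext z
          simp only [Finset.coe_insert, Finset.coe_erase, Set.mem_union, Set.mem_diff,
            Set.mem_insert_iff, Set.mem_singleton_iff, Finset.mem_coe]
          constructor
          · intro hz
            by_cases hzt : z = t
            · exact Or.inr hzt
            · exact Or.inl ⟨Or.inr ⟨hz, hzt⟩, fun h => hkDt (h ▸ hz)⟩
          · rintro (⟨(h | h), hzk⟩ | h)
            · exact (hzk h).elim
            · exact h.1
            · exact h ▸ htDt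
    obtain ⟨A, h1, hkA, hAcard⟩ := hstep1
    obtain ⟨B, hkB, hBcard, h3⟩ := hstep3
    have h2 := reach_aux G hkdom (B \ A).card A B le_rfl hkA hkB
      (by rw [hAcard, hcard, hBcard])
    exact seq_of_rtg G 2 Ds Dt hDs ((h1.trans h2).trans h3)
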